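/- Let G be a graph that is the zero-divisor graph of a commutative semigroup with zero. Then for each pair x, y of distinct nonadjacent vertices of G there is a vertex z with N(x) ∪ N(y) ⊆ N(z) ∪ {z}. -/

import Mathlib

/-- A zero-divisor: a nonzero element annihilated by some nonzero element. -/
def IsZeroDivisorElem {S : Type*} [Mul S] [Zero S] (x : S) : Prop :=
  x ≠ 0 ∧ ∃ y : S, y ≠ 0 ∧ x * y = 0

/-- The zero-divisor graph Γ(S) of a commutative semigroup with zero:
vertices are the nonzero zero-divisors, two distinct vertices adjacent iff their product is 0. -/
def zdGraph (S : Type*) [CommSemigroup S] [Zero S] :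
    SimpleGraph {x : S // IsZeroDivisorElem x} where
  Adj a b := a ≠ b ∧ (a : S) * (b : S) = 0
  symm := by
    constructor
    rintro a b ⟨h1, h2⟩
    exact ⟨h1.symm, by rwa [mul_comm] at h2⟩
  loopless := by constructor; rintro a ⟨h, _⟩; exact h rfl

/-- An end vertex: a vertex of degree one (exactly one neighbor). -/
def IsEndVertex {V : Type*} (G : SimpleGraph V) (v : V) : Prop :=
  ∃! u, G.Adj v u

/-- An internal vertex: degree ≥ 2 and no neighbor of degree 1. -/
def IsInternal {V : Type*} (G : SimpleGraph V) (v : V) : Prop :=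
  (∃ u, G.Adj v u) ∧ ¬ IsEndVertex G v ∧ ∀ u, G.Adj v u → ¬ IsEndVertex G u

/-- C(a,b): the elements of S that are vertices whose neighborhood is exactly {a, b}. -/
def cSet (S : Type*) [CommSemigroup S] [Zero S]
    (a b : {x : S // IsZeroDivisorElem x}) : Set S :=
  {x : S | ∃ h : IsZeroDivisorElem x, (zdGraph S).neighborSet ⟨x, h⟩ = {a, b}}

/-- T_a: the elements of S that are end vertices adjacent to the vertex a. -/
def tSet (S : Type*) [CommSemigroup S] [Zero S]
    (a : {x : S // IsZeroDivisorElem x}) : Set S :=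
  {x : S | ∃ h : IsZeroDivisorElem x,
    (zdGraph S).Adj ⟨x, h⟩ a ∧ IsEndVertex (zdGraph S) ⟨x, h⟩}

/-- In a zero-divisor graph, for every pair of distinct nonadjacent vertices x, y
there is a vertex z with N(x) ∪ N(y) ⊆ N(z) ∪ {z}. -/
theorem stmt15 {S : Type*} [CommSemigroup S] [Zero S] (hz : ∀ x : S, 0 * x = 0)
    (x y : {t : S // IsZeroDivisorElem t}) (hxy : x ≠ y)
    (hnadj : ¬ (zdGraph S).Adj x y) :
    ∃ w : {t : S // IsZeroDivisorElem t},
      (zdGraph S).neighborSet x ∪ (zdGraph S).neighborSet y ⊆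
        insert w ((zdGraph S).neighborSet w) := by
  have hp : (x : S) * y ≠ 0 := fun h => hnadj ⟨hxy, h⟩
  obtain ⟨hx0, y', hy'0, hxy'⟩ := x.2
  have hpz : IsZeroDivisorElem ((x : S) * y) := by
    refine ⟨hp, y', hy'0, ?_⟩
    calc (x : S) * y * y' = (x : S) * y' * y := by
          rw [mul_assoc, mul_assoc, mul_comm (y : S)]
      _ = 0 := by rw [hxy', hz]
  refine ⟨⟨(x : S) * y, hpz⟩, ?_⟩
  rintro a (ha | ha)
  · have h0 : (a : S) * ((x : S) * y) = 0 := by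
      rw [← mul_assoc, mul_comm (a : S), ha.2, hz]
    by_cases hw : a = ⟨(x : S) * y, hpz⟩
    · exact Set.mem_insert_iff.mpr (Or.inl hw)
    · exact Set.mem_insert_iff.mpr (Or.inr ⟨fun h => hw h.symm, by
        rw [mul_comm]; exact h0⟩)
  · have h0 : (a : S) * ((x : S) * y) = 0 := by
      rw [mul_comm (x : S), ← mul_assoc, mul_comm (a : S), ha.2, hz]
    by_cases hw : a = ⟨(x : S) * y, hpz⟩
    · exact Set.mem_insert_iff.mpr (Or.inl hw)
    · exact Set.mem_insert_iff.mpr (Or.inr ⟨fun h => hw h.symm, by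
        rw [mul_comm]; exact h0⟩)
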